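/- Let κ₀, κ₁, r, p > 0 and let f : [0,∞) → [0,∞) be continuously differentiable with f'(t) ≤ −κ₀ f(t)^{1+r/p} + κ₁ for all t > 0. Then there exists a constant C > 0, depending only on κ₀, r and p, such that for all t > 0: f(t) ≤ C t^{−p/r} + (r κ₁/(r+2p)) t. -/

import Mathlib

open Real

/-- Superadditivity of `x ↦ x ^ q` for `q ≥ 1` on positive reals. -/
lemma rpow_superadd {x y q : ℝ} (hx : 0 < x) (hy : 0 < y) (hq : 1 ≤ q) :
    x ^ q + y ^ q ≤ (x + y) ^ q := by
  have hxy : 0 < x + y := by linarith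
  have h1 : x ^ q = x * x ^ (q - 1) := by
    rw [← Real.rpow_one_add' hx.le (by linarith)]
    ring_nf
  have h2 : y ^ q = y * y ^ (q - 1) := by
    rw [← Real.rpow_one_add' hy.le (by linarith)]
    ring_nf
  have h3 : (x + y) ^ q = (x + y) * (x + y) ^ (q - 1) := by
    rw [← Real.rpow_one_add' hxy.le (by linarith)]
    ring_nf
  rw [h1, h2, h3]
  have hx' : x ^ (q - 1) ≤ (x + y) ^ (q - 1) :=
    Real.rpow_le_rpow hx.le (by linarith) (by linarith)
  have hy' : y ^ (q - 1) ≤ (x + y) ^ (q - 1) :=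
    Real.rpow_le_rpow hy.le (by linarith) (by linarith)
  have := mul_le_mul_of_nonneg_left hx' hx.le
  have := mul_le_mul_of_nonneg_left hy' hy.le
  nlinarith

set_option maxHeartbeats 1000000 in
/-- Let `κ₀, κ₁, r, p > 0` and `f : [0,∞) → [0,∞)` be continuously
differentiable with `f'(t) ≤ -κ₀ f(t)^{1+r/p} + κ₁` for all `t > 0`. Then there is a
constant `C > 0`, depending only on `κ₀, r, p`, such that for all `t > 0`:
`f(t) ≤ C t^{-p/r} + (r κ₁/(r+2p)) t`. -/
theorem stmt_5 (κ₀ r p : ℝ) (hκ₀ : 0 < κ₀) (hr : 0 < r) (hp : 0 < p) :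
    ∃ C > 0, ∀ κ₁ : ℝ, 0 < κ₁ → ∀ f : ℝ → ℝ,
      ContDiffOn ℝ 1 f (Set.Ici 0) →
      (∀ t, 0 ≤ t → 0 ≤ f t) →
      (∀ t, 0 < t → deriv f t ≤ -κ₀ * f t ^ (1 + r / p) + κ₁) →
      ∀ t, 0 < t → f t ≤ C * t ^ (-(p / r)) + (r * κ₁ / (r + 2 * p)) * t := by
  have hα : 0 < r / p := div_pos hr hp
  have hβ : 0 < p / r := div_pos hp hr
  set q : ℝ := 1 + r / p with hq_def
  have hq1 : 1 < q := by simp only [hq_def]; linarith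
  have hrp2 : 0 < r + 2 * p := by linarith
  set a : ℝ := r / (r + 2 * p) with ha_def
  have ha : 0 < a := div_pos hr hrp2
  have ha1 : a < 1 := by rw [ha_def, div_lt_one hrp2]; linarith
  have h1a : 0 < 1 - a := by linarith
  have haq : (0:ℝ) < a ^ q := Real.rpow_pos_of_pos ha q
  set M : ℝ := ((1 - a) / (κ₀ * a ^ q)) ^ (p / r) with hM_def
  have hMbase : 0 < (1 - a) / (κ₀ * a ^ q) := div_pos h1a (mul_pos hκ₀ haq)
  have hM : 0 < M := Real.rpow_pos_of_pos hMbase _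
  set E : ℝ := p / r + (1 - a) * M + 1 with hE_def
  have hE : 0 < E := by positivity
  set C : ℝ := max 1 ((E / κ₀) ^ (p / r)) with hC_def
  have hC1 : 1 ≤ C := le_max_left _ _
  have hC0 : 0 < C := lt_of_lt_of_le one_pos hC1
  -- `κ₀ * C ^ q ≥ C * E`
  have hCE : C * E ≤ κ₀ * C ^ q := by
    have h1 : (E / κ₀) ^ (p / r) ≤ C := le_max_right _ _
    have h2 : E / κ₀ ≤ C ^ (r / p) := by
      have h := Real.rpow_le_rpow (Real.rpow_nonneg (by positivity) _) h1 hα.le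
      rwa [← Real.rpow_mul (show (0:ℝ) ≤ E / κ₀ by positivity),
        show (p / r) * (r / p) = 1 by field_simp, Real.rpow_one] at h
    have h3 : C ^ q = C * C ^ (r / p) := by
      rw [hq_def, Real.rpow_add hC0, Real.rpow_one]
    rw [h3]
    calc C * E ≤ C * (κ₀ * C ^ (r / p)) := by
          have : E ≤ κ₀ * C ^ (r / p) := by
            rw [div_le_iff₀ hκ₀] at h2; linarith [h2]
          exact mul_le_mul_of_nonneg_left this hC0.le
      _ = κ₀ * (C * C ^ (r / p)) := by ring
  clear_value q a M E C
  set D : ℝ := κ₀ * C ^ q - (p / r) * C with hD_def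
  have hD1 : (1 - a) * M + 1 ≤ D := by
    have hh : (p / r) * C + ((1 - a) * M + 1) ≤ C * E := by
      rw [hE_def]
      have hcm : (0:ℝ) ≤ (C - 1) * ((1 - a) * M + 1) :=
        mul_nonneg (sub_nonneg.mpr hC1) (by positivity)
      linarith only [hcm]
    rw [hD_def]; linarith only [hCE, hh]
  have hD0 : 0 < D := by linarith [mul_pos h1a hM]
  clear_value D
  refine ⟨C, hC0, ?_⟩
  intro κ₁ hκ₁ f hfC hfnn hfd t ht
  -- exponent arithmetic
  have hexp1 : (-(p / r)) * q = -(p / r) - 1 := by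
    rw [hq_def]; field_simp; ring
  have hexp2 : (p / r + 1) * (r / p) = q := by
    rw [hq_def]; field_simp
  have hexpq : q - r / p = 1 := by rw [hq_def]; ring
  -- key strict supersolution inequality
  have key : ∀ x : ℝ, 0 < x →
      -κ₀ * (C * x ^ (-(p / r)) + a * κ₁ * x) ^ q + κ₁ <
        -(p / r) * C * x ^ (-(p / r) - 1) + a * κ₁ := by
    intro x hx
    have hx1 : (0:ℝ) < C * x ^ (-(p / r)) := by positivity
    have hx2 : (0:ℝ) < a * κ₁ * x := by positivity
    have hsup : (C * x ^ (-(p / r))) ^ q + (a * κ₁ * x) ^ q ≤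
        (C * x ^ (-(p / r)) + a * κ₁ * x) ^ q :=
      rpow_superadd hx1 hx2 hq1.le
    have e1 : (C * x ^ (-(p / r))) ^ q = C ^ q * x ^ (-(p / r) - 1) := by
      rw [Real.mul_rpow hC0.le (Real.rpow_nonneg hx.le _), ← Real.rpow_mul hx.le, hexp1]
    have e2 : (a * κ₁ * x) ^ q = a ^ q * κ₁ ^ q * x ^ q := by
      rw [Real.mul_rpow (by positivity) hx.le, Real.mul_rpow ha.le hκ₁.le]
    have hxq : (0:ℝ) < x ^ q := Real.rpow_pos_of_pos hx _
    have hxm : (0:ℝ) < x ^ (-(p / r) - 1) := Real.rpow_pos_of_pos hx _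
    -- main inequality : κ₀ * ((C x^{-β})^q + (aκ₁x)^q) > βC x^{-β-1} + (1-a)κ₁
    have main : (p / r) * C * x ^ (-(p / r) - 1) + (1 - a) * κ₁ <
        κ₀ * ((C * x ^ (-(p / r))) ^ q + (a * κ₁ * x) ^ q) := by
      rw [e1, e2]
      have hsx : κ₀ * C ^ q * x ^ (-(p / r) - 1)
          = (p / r) * C * x ^ (-(p / r) - 1) + D * x ^ (-(p / r) - 1) := by
        rw [hD_def]; ring
      rcases le_or_gt ((1 - a) * κ₁) (D * x ^ (-(p / r) - 1)) with hcase | hcase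
      · -- small x : the D-term dominates
        have hpos : 0 < κ₀ * (a ^ q * κ₁ ^ q * x ^ q) := by positivity
        linarith only [hsx, hcase, hpos]
      · -- large x : the κ₁-term dominates
        have hxβ1 : (0:ℝ) < x ^ (p / r + 1) := Real.rpow_pos_of_pos hx _
        have hinv : x ^ (-(p / r) - 1) = (x ^ (p / r + 1))⁻¹ := by
          rw [← Real.rpow_neg hx.le]; ring_nf
        have hlb : M / κ₁ < x ^ (p / r + 1) := by
          have h1 : D < (1 - a) * κ₁ * x ^ (p / r + 1) := by
            rw [hinv] at hcase
            have h0 : D * (x ^ (p / r + 1))⁻¹ * x ^ (p / r + 1)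
                < (1 - a) * κ₁ * x ^ (p / r + 1) :=
              mul_lt_mul_of_pos_right hcase hxβ1
            rwa [inv_mul_cancel_right₀ hxβ1.ne'] at h0
          have h2 : (1 - a) * M ≤ D := by linarith only [hD1]
          have h3 : (1 - a) * M < (1 - a) * (κ₁ * x ^ (p / r + 1)) := by
            linarith only [h1, h2]
          have h4 := (mul_lt_mul_iff_right₀ h1a).mp h3
          rw [div_lt_iff₀ hκ₁]
          linarith only [h4]
        have hxq' : (M / κ₁) ^ (r / p) < (x ^ (p / r + 1)) ^ (r / p) :=
          Real.rpow_lt_rpow (by positivity) hlb hα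
        have hxq2 : (x ^ (p / r + 1)) ^ (r / p) = x ^ q := by
          rw [← Real.rpow_mul hx.le, hexp2]
        have hone : (p / r) * (r / p) = 1 := by field_simp
        have hMα : (M / κ₁) ^ (r / p) = (1 - a) / (κ₀ * a ^ q) / κ₁ ^ (r / p) := by
          rw [Real.div_rpow hM.le hκ₁.le, hM_def, ← Real.rpow_mul hMbase.le, hone,
            Real.rpow_one]
        rw [hxq2, hMα] at hxq'
        have hκpow : κ₁ ^ q / κ₁ ^ (r / p) = κ₁ := by
          rw [← Real.rpow_sub hκ₁, hexpq, Real.rpow_one]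
        have hκrp : (0:ℝ) < κ₁ ^ (r / p) := Real.rpow_pos_of_pos hκ₁ _
        have key2 : (1 - a) * κ₁ < κ₀ * (a ^ q * κ₁ ^ q * x ^ q) := by
          have h := mul_lt_mul_of_pos_left hxq'
            (show (0:ℝ) < κ₀ * (a ^ q * κ₁ ^ q) by positivity)
          have e3 : κ₀ * (a ^ q * κ₁ ^ q) * ((1 - a) / (κ₀ * a ^ q) / κ₁ ^ (r / p))
              = (1 - a) * κ₁ := by
            have hne1 : (κ₀ * a ^ q) ≠ 0 := (mul_pos hκ₀ haq).ne'
            calc κ₀ * (a ^ q * κ₁ ^ q) * ((1 - a) / (κ₀ * a ^ q) / κ₁ ^ (r / p))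
                = (1 - a) * (κ₁ ^ q / κ₁ ^ (r / p)) * ((κ₀ * a ^ q) / (κ₀ * a ^ q)) := by
                  ring
              _ = (1 - a) * κ₁ * 1 := by rw [hκpow, div_self hne1]
              _ = (1 - a) * κ₁ := by ring
          rw [e3] at h
          calc (1 - a) * κ₁ < κ₀ * (a ^ q * κ₁ ^ q) * x ^ q := h
            _ = κ₀ * (a ^ q * κ₁ ^ q * x ^ q) := by ring
        linarith only [hsx, key2, mul_pos hD0 hxm]
    have hκ : κ₀ * ((C * x ^ (-(p / r))) ^ q + (a * κ₁ * x) ^ q) ≤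
        κ₀ * (C * x ^ (-(p / r)) + a * κ₁ * x) ^ q :=
      mul_le_mul_of_nonneg_left hsup hκ₀.le
    linarith
  -- derivative of f exists at interior points
  have hdiff : ∀ x : ℝ, 0 < x → HasDerivAt f (deriv f x) x := by
    intro x hx
    have h1 : Set.Ici (0:ℝ) ∈ nhds x := Ici_mem_nhds hx
    exact ((hfC.contDiffAt h1).differentiableAt one_ne_zero).hasDerivAt
  -- derivative of the barrier
  have hBd : ∀ s : ℝ, 0 < s →
      HasDerivAt (fun u : ℝ => C * u ^ (-(p / r)) + a * κ₁ * u)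
        (-(p / r) * C * s ^ (-(p / r) - 1) + a * κ₁) s := by
    intro s hs
    have h1 : HasDerivAt (fun u : ℝ => u ^ (-(p / r)))
        ((-(p / r)) * s ^ (-(p / r) - 1)) s :=
      Real.hasDerivAt_rpow_const (Or.inl hs.ne')
    have h2 := (h1.const_mul C).add ((hasDerivAt_id s).const_mul (a * κ₁))
    exact h2.congr_deriv (by ring)
  -- bound f on [0, t]
  have hcont : ContinuousOn f (Set.Icc 0 t) :=
    hfC.continuousOn.mono (Set.Icc_subset_Ici_self)
  obtain ⟨K, hK⟩ := isCompact_Icc.exists_bound_of_continuousOn hcont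
  set K' : ℝ := max K 1 with hK'_def
  have hK'0 : 0 < K' := lt_of_lt_of_le one_pos (le_max_right _ _)
  -- choose the starting time t₀
  set t₀ : ℝ := min (t / 2) ((C / K') ^ (r / p)) with ht₀_def
  have ht₀0 : 0 < t₀ := lt_min (by linarith) (Real.rpow_pos_of_pos (div_pos hC0 hK'0) _)
  have ht₀t : t₀ ≤ t := le_trans (min_le_left _ _) (by linarith)
  -- f t₀ ≤ barrier at t₀
  have hft₀ : f t₀ ≤ K' := by
    have h1 : f t₀ ≤ ‖f t₀‖ := le_abs_self _
    have h2 := hK t₀ ⟨ht₀0.le, ht₀t⟩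
    exact h1.trans (h2.trans (le_max_left _ _))
  have hCt₀ : K' ≤ C * t₀ ^ (-(p / r)) := by
    have h1 : t₀ ≤ (C / K') ^ (r / p) := min_le_right _ _
    have hone : (r / p) * (p / r) = 1 := by field_simp
    have h2 : t₀ ^ (p / r) ≤ C / K' := by
      have := Real.rpow_le_rpow ht₀0.le h1 hβ.le
      rwa [← Real.rpow_mul (by positivity), hone, Real.rpow_one] at this
    have ht₀β : (0:ℝ) < t₀ ^ (p / r) := Real.rpow_pos_of_pos ht₀0 _
    have h3 : K' * t₀ ^ (p / r) ≤ C := by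
      rw [le_div_iff₀ hK'0] at h2
      linarith only [h2]
    have h6 := mul_le_mul_of_nonneg_right h3 (inv_nonneg.mpr ht₀β.le)
    rw [mul_assoc, mul_inv_cancel₀ ht₀β.ne', mul_one] at h6
    rwa [Real.rpow_neg ht₀0.le]
  have hinit : f t₀ ≤ C * t₀ ^ (-(p / r)) + a * κ₁ * t₀ := by
    have : (0:ℝ) < a * κ₁ * t₀ := by positivity
    linarith
  -- apply the fencing theorem on [t₀, t]
  have hmain : f t ≤ C * t ^ (-(p / r)) + a * κ₁ * t := by
    have := image_le_of_deriv_right_lt_deriv_boundary'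
      (f := f) (f' := deriv f) (a := t₀) (b := t)
      (B := fun u => C * u ^ (-(p / r)) + a * κ₁ * u)
      (B' := fun u => -(p / r) * C * u ^ (-(p / r) - 1) + a * κ₁)
      (hfC.continuousOn.mono (fun x hx => le_trans ht₀0.le hx.1))
      (fun x hx => (hdiff x (lt_of_lt_of_le ht₀0 hx.1)).hasDerivWithinAt)
      hinit
      (fun x hx => (hBd x (lt_of_lt_of_le ht₀0 hx.1)).continuousAt.continuousWithinAt)
      (fun x hx => (hBd x (lt_of_lt_of_le ht₀0 hx.1)).hasDerivWithinAt)
      ?_ ⟨ht₀t, le_refl t⟩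
    · exact this
    · intro x hx hfx
      have hxpos : 0 < x := lt_of_lt_of_le ht₀0 hx.1
      calc deriv f x ≤ -κ₀ * f x ^ q + κ₁ := hfd x hxpos
        _ = -κ₀ * (C * x ^ (-(p / r)) + a * κ₁ * x) ^ q + κ₁ := by rw [hfx]
        _ < -(p / r) * C * x ^ (-(p / r) - 1) + a * κ₁ := key x hxpos
  have hfin : a * κ₁ * t = r * κ₁ / (r + 2 * p) * t := by
    rw [ha_def]; ring
  linarith [hmain, hfin.le, hfin.ge]
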